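/- Let $G$ be an infinite group, let $A$ be a $\Delta_\omega$-set of $G$, and let $\tau$ be a left translation invariant topology on $G$ such that the inversion map $x \mapsto x^{-1}$ is continuous at the identity $e$. Then the closure $\mathrm{cl}_\tau A$ is a neighborhood of $e$ in $\tau$. -/

import Mathlib

def IsDeltaOmega {G : Type*} [Group G] (A : Set G) : Prop :=
  (1 : G) ∈ A ∧ ∀ Y : Set G, Y.Infinite →
    ∃ x ∈ Y, ∃ y ∈ Y, x ≠ y ∧ x⁻¹ * y ∈ A ∧ y⁻¹ * x ∈ A

open Classical in
noncomputable def nextEl {G : Type*} [Group G] (W : Set G) (l : List G) : G :=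
  if h : ∃ z : G, ∀ x ∈ l, x⁻¹ * z ∈ W then h.choose else 1

theorem nextEl_spec {G : Type*} [Group G] (W : Set G) (l : List G)
    (h : ∃ z : G, ∀ x ∈ l, x⁻¹ * z ∈ W) : ∀ x ∈ l, x⁻¹ * nextEl W l ∈ W := by
  rw [nextEl, dif_pos h]
  exact h.choose_spec

noncomputable def seqList {G : Type*} [Group G] (W : Set G) : ℕ → List G
  | 0 => []
  | n+1 => nextEl W (seqList W n) :: seqList W n

theorem stmt_12 {G : Type*} [Group G] [Infinite G] (A : Set G) (hA : IsDeltaOmega A)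
    (τ : TopologicalSpace G)
    (hleft : ∀ g : G, Continuous fun x : G => g * x)
    (hinv : ContinuousAt (fun x : G => x⁻¹) (1 : G)) :
    closure A ∈ nhds (1 : G) := by
  classical
  by_contra h
  set W : Set G := (closure A)ᶜ with hWdef
  have hWopen : IsOpen W := isClosed_closure.isOpen_compl
  have h1W : (1 : G) ∈ closure W := by
    rw [mem_closure_iff]
    intro o ho h1o
    rcases Set.eq_empty_or_nonempty (o ∩ W) with he | hne
    · refine absurd (mem_nhds_iff.mpr ⟨o, fun x hx => ?_, ho, h1o⟩) h
      by_contra hx'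
      exact (Set.eq_empty_iff_forall_notMem.mp he) x ⟨hx, hx'⟩
    · exact hne
  have h1A : (1 : G) ∉ W := fun hw => hw (subset_closure hA.1)
  -- closure of translates
  have hshift : ∀ g : G, g ∈ closure ((fun z : G => g⁻¹ * z) ⁻¹' W) := by
    intro g
    have hcl : closure ((fun z : G => g⁻¹ * z) ⁻¹' W)
        = (fun z : G => g⁻¹ * z) ⁻¹' (closure W) :=
      (Homeomorph.preimage_closure
        { toFun := fun z => g⁻¹ * z
          invFun := fun z => g * z
          left_inv := fun z => by simp
          right_inv := fun z => by simp
          continuous_toFun := hleft g⁻¹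
          continuous_invFun := hleft g } W).symm
    rw [hcl]
    simpa using h1W
  -- the key existence for the recursion
  have key : ∀ n : ℕ, ∃ z : G, ∀ x ∈ seqList W n, x⁻¹ * z ∈ W := by
    intro n
    induction n with
    | zero => exact ⟨1, by simp [seqList]⟩
    | succ n ih =>
      set z₀ := nextEl W (seqList W n) with hz₀def
      have hz₀ : ∀ x ∈ seqList W n, x⁻¹ * z₀ ∈ W := nextEl_spec W _ ih
      have hO : IsOpen {u : G | ∀ x ∈ seqList W n, x⁻¹ * u ∈ W} := by
        have he : {u : G | ∀ x ∈ seqList W n, x⁻¹ * u ∈ W}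
            = ⋂ x ∈ {y | y ∈ seqList W n}, (fun u : G => x⁻¹ * u) ⁻¹' W := by
          ext u; simp
        rw [he]
        exact (List.finite_toSet _).isOpen_biInter
          (fun x _ => hWopen.preimage (hleft x⁻¹))
      have hmem : z₀ ∈ {u : G | ∀ x ∈ seqList W n, x⁻¹ * u ∈ W} := hz₀
      have := (mem_closure_iff.mp (hshift z₀)) _ hO hmem
      obtain ⟨z, hzO, hzW⟩ := this
      refine ⟨z, ?_⟩
      intro x hx
      rcases List.mem_cons.mp (by simpa [seqList] using hx) with rfl | hx'
      · exact hzW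
      · exact hzO x hx'
  -- the sequence
  set f : ℕ → G := fun n => nextEl W (seqList W n) with hfdef
  have hfW : ∀ n, ∀ x ∈ seqList W n, x⁻¹ * f n ∈ W := fun n =>
    nextEl_spec W _ (key n)
  have hmemlist : ∀ n m : ℕ, m < n → f m ∈ seqList W n := by
    intro n
    induction n with
    | zero => intro m hm; omega
    | succ n ih =>
      intro m hm
      rcases Nat.lt_succ_iff_lt_or_eq.mp hm with hm' | rfl
      · exact List.mem_cons_of_mem _ (ih m hm')
      · exact List.mem_cons_self
  have hpair : ∀ m n : ℕ, m < n → (f m)⁻¹ * f n ∈ W := fun m n hmn =>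
    hfW n (f m) (hmemlist n m hmn)
  have hinj : Function.Injective f := by
    intro m n hmn
    by_contra hne
    rcases Nat.lt_or_ge m n with hlt | hge
    · have := hpair m n hlt
      rw [hmn] at this
      simp at this
      exact h1A this
    · have hlt : n < m := by omega
      have := hpair n m hlt
      rw [hmn] at this
      simp at this
      exact h1A this
  have hYinf : (Set.range f).Infinite := Set.infinite_range_of_injective hinj
  obtain ⟨x, hx, y, hy, hxy, hxyA, hyxA⟩ := hA.2 (Set.range f) hYinf
  obtain ⟨a, rfl⟩ := hx
  obtain ⟨b, rfl⟩ := hy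
  have hab : a ≠ b := fun e => hxy (by rw [e])
  rcases Nat.lt_or_ge a b with hlt | hge
  · exact (hpair a b hlt) (subset_closure hxyA)
  · have hlt : b < a := by omega
    exact (hpair b a hlt) (subset_closure hyxA)
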